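/- arXiv:1301.6111 — 3 statements merged into one kernel-verified Lean document; each statement's English description precedes it below -/
import Mathlib

section
/- For all symmetric probability measures x1, x3, x4 ∈ X, H(x1 ⊛ (x3 − x4)) + H(x1 ⊠ (x3 − x4)) = H(x3 − x4), where the operations and H are extended bilinearly and linearly to signed measures. -/
open MeasureTheory Real Filter Topology Polynomial

noncomputable section

/-- The space of finite signed Borel measures on the extended reals `ℝ̄`. -/
abbrev SM := MeasureTheory.SignedMeasure EReal

namespace SCLDPC

/-- The weight `e^{-α/2}` as an extended nonnegative real (`+∞` at `α = -∞`). -/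
def wt (α : EReal) : ENNReal :=
  if α = ⊥ then ⊤ else if α = ⊤ then 0 else ENNReal.ofReal (Real.exp (-(α.toReal) / 2))

/-- A (nonnegative) Borel measure `μ` on `ℝ̄` is symmetric if
`∫_{-E} e^{-α/2} μ(dα) = ∫_{E} e^{-α/2} μ(dα)` for every Borel set `E`
(stated with extended nonnegative integrals, which is equivalent to requiring
equality whenever one of the two sides is finite). -/
def IsSymmMeasure (μ : Measure EReal) : Prop :=
  ∀ E : Set EReal, MeasurableSet E →
    ∫⁻ α in (fun a : EReal => -a) ⁻¹' E, wt α ∂μ = ∫⁻ α in E, wt α ∂μ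

/-- Positive part of the Jordan decomposition. -/
def jp (x : SM) : Measure EReal := x.toJordanDecomposition.posPart

/-- Negative part of the Jordan decomposition. -/
def jn (x : SM) : Measure EReal := x.toJordanDecomposition.negPart

instance (x : SM) : IsFiniteMeasure (jp x) := x.toJordanDecomposition.posPart_finite

instance (x : SM) : IsFiniteMeasure (jn x) := x.toJordanDecomposition.negPart_finite

/-- A finite signed Borel measure on `ℝ̄` is symmetric iff both parts of its Jordan
decomposition are symmetric measures. -/
def IsSymm (x : SM) : Prop := IsSymmMeasure (jp x) ∧ IsSymmMeasure (jn x)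

/-- Membership in `X`, the set of symmetric probability measures on `ℝ̄`. -/
def MemX (x : SM) : Prop :=
  (∃ (μ : Measure EReal) (hμ : IsProbabilityMeasure μ),
      x = (letI := hμ; μ.toSignedMeasure)) ∧ IsSymm x

/-- Membership in `X_d`, the set of differences of symmetric probability measures. -/
def MemXd (y : SM) : Prop := ∃ x1 x2 : SM, MemX x1 ∧ MemX x2 ∧ y = x1 - x2

/-- Integral of a real function against a finite signed measure. -/
def sInt (f : EReal → ℝ) (x : SM) : ℝ := (∫ α, f α ∂(jp x)) - ∫ α, f α ∂(jn x)

/-- `tanh(α/2)` extended continuously to `ℝ̄`. -/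
def tanhHalf (α : EReal) : ℝ :=
  if α = ⊤ then 1 else if α = ⊥ then -1 else Real.tanh (α.toReal / 2)

/-- The inverse hyperbolic tangent on `(-1, 1)`. -/
def artanh (t : ℝ) : ℝ := Real.log ((1 + t) / (1 - t)) / 2

/-- `2 tanh⁻¹(t)` valued in `ℝ̄` (sending `t ≥ 1` to `+∞` and `t ≤ -1` to `-∞`). -/
def atanhTwo (t : ℝ) : EReal :=
  if 1 ≤ t then ⊤ else if t ≤ -1 then ⊥ else ((2 * artanh t : ℝ) : EReal)

/-- Variable-node convolution `⊛` of two (nonnegative) measures: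
`(μ ⊛ ν)(E) = ∫ μ(E - α) ν(dα)`, i.e. the pushforward of `μ × ν` under addition. -/
def mConv (μ ν : Measure EReal) : Measure EReal :=
  (μ.prod ν).map fun p => p.1 + p.2

/-- Check-node convolution `⊠` of two (nonnegative) measures:
`(μ ⊠ ν)(E) = ∫ μ(2 tanh⁻¹(tanh(E/2) / tanh(α/2))) ν(dα)`, where the argument of `μ`
is the image of `E` under `β ↦ 2 tanh⁻¹(tanh(β/2) / tanh(α/2))`; equivalently, the
pushforward of `μ × ν` under `(β, α) ↦ 2 tanh⁻¹(tanh(β/2) · tanh(α/2))`. -/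
def mCheck (μ ν : Measure EReal) : Measure EReal :=
  (μ.prod ν).map fun p => atanhTwo (tanhHalf p.1 * tanhHalf p.2)

instance (μ ν : Measure EReal) [IsFiniteMeasure μ] [IsFiniteMeasure ν] :
    IsFiniteMeasure (mConv μ ν) := by unfold mConv; infer_instance

instance (μ ν : Measure EReal) [IsFiniteMeasure μ] [IsFiniteMeasure ν] :
    IsFiniteMeasure (mCheck μ ν) := by unfold mCheck; infer_instance

/-- The variable-node operation `⊛` extended bilinearly to finite signed measures. -/
def sConv (x y : SM) : SM :=
  (mConv (jp x) (jp y)).toSignedMeasure - (mConv (jp x) (jn y)).toSignedMeasure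
    - (mConv (jn x) (jp y)).toSignedMeasure + (mConv (jn x) (jn y)).toSignedMeasure

/-- The check-node operation `⊠` extended bilinearly to finite signed measures. -/
def sCheck (x y : SM) : SM :=
  (mCheck (jp x) (jp y)).toSignedMeasure - (mCheck (jp x) (jn y)).toSignedMeasure
    - (mCheck (jn x) (jp y)).toSignedMeasure + (mCheck (jn x) (jn y)).toSignedMeasure

/-- The integrand `log₂(1 + e^{-α})` of the entropy functional (with the harmless
convention that it vanishes at `α = ±∞`; symmetric measures put no mass at `-∞`). -/
def entFn (α : EReal) : ℝ :=
  if α = ⊤ then 0 else if α = ⊥ then 0 else Real.logb 2 (1 + Real.exp (-(α.toReal)))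

/-- The entropy functional `H(x) = ∫ log₂(1 + e^{-α}) x(dα)`. -/
def H (x : SM) : ℝ := sInt entFn x

/-! ### Auxiliary lemmas -/

section RealLemmas

lemma tanh_half_eq (a : ℝ) : Real.tanh (a/2) = (1 - exp (-a)) / (1 + exp (-a)) := by
  have hu : exp (a/2) ≠ 0 := (exp_pos _).ne'
  have h1 : exp (-(a/2)) = (exp (a/2))⁻¹ := exp_neg _
  have h2 : exp (-a) = (exp (a/2))⁻¹ * (exp (a/2))⁻¹ := by
    rw [← h1, ← exp_add]; ring_nf
  have h3 : (0:ℝ) < 1 + exp (-a) := by positivity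
  rw [Real.tanh_eq_sinh_div_cosh, Real.sinh_eq, Real.cosh_eq, h1, h2]
  have hden : exp (a/2) + (exp (a/2))⁻¹ ≠ 0 := by positivity
  field_simp

lemma tanh_half_mem (a : ℝ) : -1 < Real.tanh (a/2) ∧ Real.tanh (a/2) < 1 := by
  rw [tanh_half_eq]
  have hA : (0:ℝ) < exp (-a) := exp_pos _
  have h3 : (0:ℝ) < 1 + exp (-a) := by positivity
  constructor
  · rw [lt_div_iff₀ h3]; nlinarith
  · rw [div_lt_iff₀ h3]; nlinarith

lemma exp_neg_two_artanh {t : ℝ} (h1 : -1 < t) (h2 : t < 1) :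
    exp (-(2 * artanh t)) = (1 - t) / (1 + t) := by
  have hp : (0:ℝ) < (1 + t) / (1 - t) := by
    apply div_pos <;> linarith
  rw [artanh]
  have h : -(2 * (Real.log ((1 + t) / (1 - t)) / 2)) = Real.log (((1 + t) / (1 - t))⁻¹) := by
    rw [Real.log_inv]; ring
  rw [h, Real.exp_log (by positivity), inv_div]

lemma two_artanh_tanh_half (b : ℝ) : 2 * artanh (Real.tanh (b/2)) = b := by
  obtain ⟨h1, h2⟩ := tanh_half_mem b
  have hB : (0:ℝ) < exp (-b) := exp_pos _
  have h3 : (0:ℝ) < 1 + exp (-b) := by positivity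
  rw [artanh, tanh_half_eq]
  have h : (1 + (1 - exp (-b)) / (1 + exp (-b))) / (1 - (1 - exp (-b)) / (1 + exp (-b)))
      = exp b := by
    have he : exp b * exp (-b) = 1 := by rw [← exp_add]; simp
    field_simp
    nlinarith [he]
  rw [h, Real.log_exp]; ring

lemma real_identity (a b : ℝ) :
    logb 2 (1 + exp (-(a+b))) +
      logb 2 (1 + exp (-(2 * artanh (Real.tanh (a/2) * Real.tanh (b/2))))) =
    logb 2 (1 + exp (-a)) + logb 2 (1 + exp (-b)) := by
  obtain ⟨ha1, ha2⟩ := tanh_half_mem a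
  obtain ⟨hb1, hb2⟩ := tanh_half_mem b
  set t := Real.tanh (a/2) * Real.tanh (b/2) with ht
  have ht1 : -1 < t := by nlinarith
  have ht2 : t < 1 := by nlinarith
  rw [exp_neg_two_artanh ht1 ht2]
  have hA : (0:ℝ) < exp (-a) := exp_pos _
  have hB : (0:ℝ) < exp (-b) := exp_pos _
  have hab : exp (-(a+b)) = exp (-a) * exp (-b) := by rw [← exp_add]; ring_nf
  have h1t : (0:ℝ) < 1 + t := by linarith
  have key : (1 + exp (-(a+b))) * (1 + (1 - t) / (1 + t)) = (1 + exp (-a)) * (1 + exp (-b)) := by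
    rw [hab, ht, tanh_half_eq, tanh_half_eq]
    have h3 : (0:ℝ) < 1 + exp (-a) := by positivity
    have h4 : (0:ℝ) < 1 + exp (-b) := by positivity
    rw [ht, tanh_half_eq, tanh_half_eq] at h1t
    field_simp
    field_simp at h1t
    ring_nf
    ring_nf at h1t
    field_simp
    ring
  have e1 : (0:ℝ) < 1 + exp (-(a+b)) := by positivity
  have e2 : (0:ℝ) < 1 + (1 - t) / (1 + t) := by
    have h : (0:ℝ) ≤ (1-t)/(1+t) := by apply div_nonneg <;> linarith
    linarith
  rw [← Real.logb_mul e1.ne' e2.ne', ← Real.logb_mul (by positivity) (by positivity), key]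

end RealLemmas

section PointwiseLemmas

@[simp] lemma entFn_top : entFn ⊤ = 0 := rfl

@[simp] lemma entFn_bot : entFn ⊥ = 0 := by simp [entFn]

lemma entFn_coe (a : ℝ) : entFn (a : EReal) = logb 2 (1 + exp (-a)) := by
  simp [entFn]

lemma entFn_nonneg (α : EReal) : 0 ≤ entFn α := by
  induction α using EReal.rec with
  | bot => simp
  | top => simp
  | coe a =>
      rw [entFn_coe]
      have := exp_pos (-a)
      exact Real.logb_nonneg one_lt_two (by linarith)

@[simp] lemma tanhHalf_top : tanhHalf ⊤ = 1 := rfl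

@[simp] lemma tanhHalf_bot : tanhHalf ⊥ = -1 := by simp [tanhHalf]

lemma tanhHalf_coe (a : ℝ) : tanhHalf (a : EReal) = Real.tanh (a/2) := by
  simp [tanhHalf]

lemma atanhTwo_one : atanhTwo 1 = ⊤ := by simp [atanhTwo]

lemma atanhTwo_tanh_half (b : ℝ) : atanhTwo (Real.tanh (b/2)) = (b : EReal) := by
  obtain ⟨h1, h2⟩ := tanh_half_mem b
  rw [atanhTwo, if_neg (by linarith), if_neg (by linarith), two_artanh_tanh_half]

/-- The pointwise duality identity. -/
lemma entFn_identity (α β : EReal) (hα : α ≠ ⊥) (hβ : β ≠ ⊥) :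
    entFn (α + β) + entFn (atanhTwo (tanhHalf α * tanhHalf β)) = entFn α + entFn β := by
  induction α using EReal.rec with
  | bot => exact absurd rfl hα
  | top =>
      induction β using EReal.rec with
      | bot => exact absurd rfl hβ
      | top => simp [atanhTwo_one]
      | coe b =>
          rw [EReal.top_add_coe, tanhHalf_top, tanhHalf_coe, one_mul, atanhTwo_tanh_half]
  | coe a =>
      induction β using EReal.rec with
      | bot => exact absurd rfl hβ
      | top =>
          rw [EReal.coe_add_top, tanhHalf_top, tanhHalf_coe, mul_one, atanhTwo_tanh_half]
          ring
      | coe b =>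
          obtain ⟨ha1, ha2⟩ := tanh_half_mem a
          obtain ⟨hb1, hb2⟩ := tanh_half_mem b
          have ht1 : -1 < Real.tanh (a/2) * Real.tanh (b/2) := by nlinarith
          have ht2 : Real.tanh (a/2) * Real.tanh (b/2) < 1 := by nlinarith
          rw [← EReal.coe_add, tanhHalf_coe, tanhHalf_coe, atanhTwo,
            if_neg (by linarith), if_neg (by linarith), entFn_coe, entFn_coe, entFn_coe,
            entFn_coe]
          exact real_identity a b

end PointwiseLemmas
section MeasurabilityLemmas

lemma measurable_entFn : Measurable entFn := by
  unfold entFn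
  refine Measurable.ite (measurableSet_singleton ⊤) measurable_const ?_
  refine Measurable.ite (measurableSet_singleton ⊥) measurable_const ?_
  have h : Measurable fun α : EReal => logb 2 (1 + exp (-(α.toReal))) := by
    apply Measurable.div _ measurable_const
    exact (measurable_ereal_toReal.neg.exp.const_add 1).log
  exact h

lemma measurable_addE : Measurable (fun p : EReal × EReal => p.1 + p.2) := by
  have heq : (fun p : EReal × EReal => p.1 + p.2) = fun p =>
      if p.1 = ⊥ ∨ p.2 = ⊥ then (⊥ : EReal) else if p.1 = ⊤ ∨ p.2 = ⊤ then ⊤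
      else ((p.1.toReal + p.2.toReal : ℝ) : EReal) := by
    ext ⟨x, y⟩
    induction x using EReal.rec <;> induction y using EReal.rec <;>
      simp [← EReal.coe_add]
  rw [heq]
  have h1 : MeasurableSet {p : EReal × EReal | p.1 = ⊥ ∨ p.2 = ⊥} := by
    have : {p : EReal × EReal | p.1 = ⊥ ∨ p.2 = ⊥} =
        (Prod.fst ⁻¹' {⊥}) ∪ (Prod.snd ⁻¹' {⊥}) := rfl
    rw [this]
    exact (measurable_fst (measurableSet_singleton _)).union
      (measurable_snd (measurableSet_singleton _))
  have h2 : MeasurableSet {p : EReal × EReal | p.1 = ⊤ ∨ p.2 = ⊤} := by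
    have : {p : EReal × EReal | p.1 = ⊤ ∨ p.2 = ⊤} =
        (Prod.fst ⁻¹' {⊤}) ∪ (Prod.snd ⁻¹' {⊤}) := rfl
    rw [this]
    exact (measurable_fst (measurableSet_singleton _)).union
      (measurable_snd (measurableSet_singleton _))
  exact Measurable.ite h1 measurable_const (Measurable.ite h2 measurable_const
    (measurable_coe_real_ereal.comp
      ((measurable_fst.ereal_toReal).add (measurable_snd.ereal_toReal))))

lemma measurable_tanhHalf : Measurable tanhHalf := by
  unfold tanhHalf
  refine Measurable.ite (measurableSet_singleton ⊤) measurable_const ?_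
  refine Measurable.ite (measurableSet_singleton ⊥) measurable_const ?_
  have htanh : Measurable Real.tanh := by
    have h : Real.tanh = fun x => Real.sinh x / Real.cosh x :=
      funext fun x => Real.tanh_eq_sinh_div_cosh x
    rw [h]
    exact Real.measurable_sinh.div Real.measurable_cosh
  exact htanh.comp (measurable_ereal_toReal.div_const 2)

lemma measurable_artanh : Measurable artanh := by
  unfold artanh
  exact (Real.measurable_log.comp ((measurable_const.add measurable_id).div
    (measurable_const.sub measurable_id))).div_const 2

lemma measurable_atanhTwo : Measurable atanhTwo := by
  unfold atanhTwo
  refine Measurable.ite (measurableSet_le measurable_const measurable_id) measurable_const ?_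
  refine Measurable.ite (measurableSet_le measurable_id measurable_const) measurable_const ?_
  exact measurable_coe_real_ereal.comp (measurable_artanh.const_mul 2)

lemma measurable_checkE :
    Measurable (fun p : EReal × EReal => atanhTwo (tanhHalf p.1 * tanhHalf p.2)) :=
  measurable_atanhTwo.comp ((measurable_tanhHalf.comp measurable_fst).mul
    (measurable_tanhHalf.comp measurable_snd))

end MeasurabilityLemmas

/-- The lower entropy integral. -/
def L (μ : Measure EReal) : ENNReal := ∫⁻ α, ENNReal.ofReal (entFn α) ∂μ

section KeyLemma

/-- The key product identity. -/
lemma key_product (μ ν : Measure EReal) [IsFiniteMeasure μ] [IsFiniteMeasure ν]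
    (hμ : μ {⊥} = 0) (hν : ν {⊥} = 0) :
    L (mConv μ ν) + L (mCheck μ ν) = ν Set.univ * L μ + μ Set.univ * L ν := by
  have hent : Measurable fun α => ENNReal.ofReal (entFn α) := measurable_entFn.ennreal_ofReal
  have hae : ∀ᵐ p ∂(μ.prod ν), p.1 ≠ ⊥ ∧ p.2 ≠ ⊥ := by
    rw [MeasureTheory.ae_iff]
    have hnull : (μ.prod ν) ((({⊥} : Set EReal) ×ˢ (Set.univ : Set EReal)) ∪
        ((Set.univ : Set EReal) ×ˢ ({⊥} : Set EReal))) = 0 :=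
      measure_union_null (by rw [Measure.prod_prod, hμ, zero_mul])
        (by rw [Measure.prod_prod, hν, mul_zero])
    refine measure_mono_null (fun p hp => ?_) hnull
    simp only [Set.mem_setOf_eq, not_and_or, not_not] at hp
    rcases hp with h | h
    · exact Or.inl ⟨h, Set.mem_univ _⟩
    · exact Or.inr ⟨Set.mem_univ _, h⟩
  unfold L mConv mCheck
  rw [lintegral_map hent measurable_addE, lintegral_map hent measurable_checkE]
  have h1 : ∫⁻ p, ENNReal.ofReal (entFn (p.1 + p.2)) ∂(μ.prod ν) +
      ∫⁻ p, ENNReal.ofReal (entFn (atanhTwo (tanhHalf p.1 * tanhHalf p.2))) ∂(μ.prod ν)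
      = ∫⁻ p, (ENNReal.ofReal (entFn p.1) + ENNReal.ofReal (entFn p.2)) ∂(μ.prod ν) := by
    have hm1 : Measurable fun p : EReal × EReal => ENNReal.ofReal (entFn (p.1 + p.2)) :=
      hent.comp measurable_addE
    rw [← lintegral_add_left hm1]
    refine lintegral_congr_ae (hae.mono fun p hp => ?_)
    have hid := entFn_identity p.1 p.2 hp.1 hp.2
    show ENNReal.ofReal (entFn (p.1 + p.2)) +
        ENNReal.ofReal (entFn (atanhTwo (tanhHalf p.1 * tanhHalf p.2))) =
      ENNReal.ofReal (entFn p.1) + ENNReal.ofReal (entFn p.2)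
    rw [← ENNReal.ofReal_add (entFn_nonneg _) (entFn_nonneg _), hid,
      ENNReal.ofReal_add (entFn_nonneg _) (entFn_nonneg _)]
  have hmf : Measurable fun p : EReal × EReal => ENNReal.ofReal (entFn p.1) :=
    hent.comp measurable_fst
  have hms : Measurable fun p : EReal × EReal => ENNReal.ofReal (entFn p.2) :=
    hent.comp measurable_snd
  rw [h1, lintegral_add_left hmf]
  congr 1
  · rw [MeasureTheory.lintegral_prod _ hmf.aemeasurable]
    have hin : ∀ x : EReal, ∫⁻ _, ENNReal.ofReal (entFn x) ∂ν
        = ENNReal.ofReal (entFn x) * ν Set.univ := fun x => lintegral_const _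
    simp only [hin]
    rw [lintegral_mul_const _ hent, mul_comm]
  · rw [MeasureTheory.lintegral_prod _ hms.aemeasurable]
    have hconst : ∫⁻ (_ : EReal), (∫⁻ y, ENNReal.ofReal (entFn y) ∂ν) ∂μ
        = (∫⁻ y, ENNReal.ofReal (entFn y) ∂ν) * μ Set.univ := lintegral_const _
    rw [hconst, mul_comm]

end KeyLemma
section JordanLemmas

lemma toSM_jordan (s : SM) :
    (jp s).toSignedMeasure - (jn s).toSignedMeasure = s :=
  s.toSignedMeasure_toJordanDecomposition

lemma jordan_eq (s : SM) (P N : Measure EReal) [IsFiniteMeasure P] [IsFiniteMeasure N]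
    (h : s = P.toSignedMeasure - N.toSignedMeasure) : jp s + N = P + jn s := by
  have h2 : (jp s).toSignedMeasure - (jn s).toSignedMeasure
      = P.toSignedMeasure - N.toSignedMeasure := by rw [toSM_jordan, h]
  have h3 : (jp s).toSignedMeasure + N.toSignedMeasure
      = P.toSignedMeasure + (jn s).toSignedMeasure := by
    have := sub_eq_sub_iff_add_eq_add.mp h2
    linear_combination (norm := abel) this
  rw [← Measure.toSignedMeasure_add, ← Measure.toSignedMeasure_add] at h3
  exact Measure.toSignedMeasure_eq_toSignedMeasure_iff.mp h3

lemma jp_le (s : SM) (P N : Measure EReal) [IsFiniteMeasure P] [IsFiniteMeasure N]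
    (h : s = P.toSignedMeasure - N.toSignedMeasure) : jp s ≤ P := by
  have heq := jordan_eq s P N h
  obtain ⟨u, hu, hpu, hnu⟩ := s.toJordanDecomposition.mutuallySingular
  rw [Measure.le_iff']
  intro E
  have h1 : jp s E ≤ jp s (E ∩ uᶜ) + jp s (E ∩ u) :=
    le_trans (measure_mono (fun x hx => by
      by_cases hxu : x ∈ u
      · exact Or.inr ⟨hx, hxu⟩
      · exact Or.inl ⟨hx, hxu⟩)) (measure_union_le _ _)
  have h2 : jp s (E ∩ u) = 0 :=
    measure_mono_null Set.inter_subset_right hpu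
  have h3 : jp s (E ∩ uᶜ) ≤ P E := by
    calc jp s (E ∩ uᶜ) ≤ (jp s + N) (E ∩ uᶜ) := by
          rw [Measure.add_apply]; exact le_self_add
      _ = (P + jn s) (E ∩ uᶜ) := by rw [heq]
      _ = P (E ∩ uᶜ) + jn s (E ∩ uᶜ) := Measure.add_apply _ _ _
      _ ≤ P E + 0 := by
          refine add_le_add (measure_mono Set.inter_subset_left) ?_
          rw [show (0:ENNReal) = jn s uᶜ from hnu.symm]
          exact measure_mono Set.inter_subset_right
      _ = P E := add_zero _
  calc jp s E ≤ jp s (E ∩ uᶜ) + jp s (E ∩ u) := h1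
    _ = jp s (E ∩ uᶜ) := by rw [h2, add_zero]
    _ ≤ P E := h3

lemma jn_le (s : SM) (P N : Measure EReal) [IsFiniteMeasure P] [IsFiniteMeasure N]
    (h : s = P.toSignedMeasure - N.toSignedMeasure) : jn s ≤ N := by
  have heq := jordan_eq s P N h
  obtain ⟨u, hu, hpu, hnu⟩ := s.toJordanDecomposition.mutuallySingular
  rw [Measure.le_iff']
  intro E
  have h1 : jn s E ≤ jn s (E ∩ u) + jn s (E ∩ uᶜ) :=
    le_trans (measure_mono (fun x hx => by
      by_cases hxu : x ∈ u
      · exact Or.inl ⟨hx, hxu⟩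
      · exact Or.inr ⟨hx, hxu⟩)) (measure_union_le _ _)
  have h2 : jn s (E ∩ uᶜ) = 0 :=
    measure_mono_null Set.inter_subset_right hnu
  have h3 : jn s (E ∩ u) ≤ N E := by
    calc jn s (E ∩ u) ≤ (P + jn s) (E ∩ u) := by
          rw [Measure.add_apply]; exact le_add_self
      _ = (jp s + N) (E ∩ u) := by rw [heq]
      _ = jp s (E ∩ u) + N (E ∩ u) := Measure.add_apply _ _ _
      _ ≤ 0 + N E := by
          refine add_le_add ?_ (measure_mono Set.inter_subset_left)
          rw [show (0:ENNReal) = jp s u from hpu.symm]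
          exact measure_mono Set.inter_subset_right
      _ = N E := zero_add _
  calc jn s E ≤ jn s (E ∩ u) + jn s (E ∩ uᶜ) := h1
    _ = jn s (E ∩ u) := by rw [h2, add_zero]
    _ ≤ N E := h3

/-- `sInt entFn` only depends on a representation as a difference of finite measures. -/
lemma sInt_eq (s : SM) (P N : Measure EReal) [IsFiniteMeasure P] [IsFiniteMeasure N]
    (h : s = P.toSignedMeasure - N.toSignedMeasure) (hP : L P ≠ ⊤) (hN : L N ≠ ⊤) :
    sInt entFn s = (L P).toReal - (L N).toReal := by
  have heq := jordan_eq s P N h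
  have hint : ∀ μ : Measure EReal, ∫ α, entFn α ∂μ = (L μ).toReal := by
    intro μ
    rw [MeasureTheory.integral_eq_lintegral_of_nonneg_ae
      (Filter.Eventually.of_forall entFn_nonneg) measurable_entFn.aestronglyMeasurable]
    rfl
  have hLp : L (jp s) ≤ L P := lintegral_mono' (jp_le s P N h) le_rfl
  have hLn : L (jn s) ≤ L N := lintegral_mono' (jn_le s P N h) le_rfl
  have hsum : L (jp s) + L N = L P + L (jn s) := by
    have h1 : L (jp s) + L N = L (jp s + N) := (lintegral_add_measure _ _ _).symm
    have h2 : L P + L (jn s) = L (P + jn s) := (lintegral_add_measure _ _ _).symm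
    rw [h1, h2, heq]
  have f1 : L (jp s) ≠ ⊤ := ne_top_of_le_ne_top hP hLp
  have f2 : L (jn s) ≠ ⊤ := ne_top_of_le_ne_top hN hLn
  have hreal : (L (jp s)).toReal + (L N).toReal = (L P).toReal + (L (jn s)).toReal := by
    rw [← ENNReal.toReal_add f1 hN, ← ENNReal.toReal_add hP f2, hsum]
  rw [sInt, hint, hint]
  linarith

end JordanLemmas

section SymmLemmas

@[simp] lemma wt_bot : wt ⊥ = ⊤ := rfl

@[simp] lemma wt_top : wt ⊤ = 0 := by simp [wt]

lemma wt_coe (a : ℝ) : wt (a : EReal) = ENNReal.ofReal (exp (-a / 2)) := by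
  simp [wt]

lemma measurable_wt : Measurable wt := by
  unfold wt
  refine Measurable.ite (measurableSet_singleton ⊥) measurable_const ?_
  refine Measurable.ite (measurableSet_singleton ⊤) measurable_const ?_
  exact (measurable_ereal_toReal.neg.div_const 2).exp.ennreal_ofReal

lemma IsSymmMeasure.bot_null {μ : Measure EReal} (h : IsSymmMeasure μ) : μ {⊥} = 0 := by
  have h1 := h {⊤} (measurableSet_singleton _)
  have hpre : (fun a : EReal => -a) ⁻¹' {⊤} = {⊥} := by
    ext α; simp [EReal.neg_eq_top_iff]
  rw [hpre, lintegral_singleton' measurable_wt, lintegral_singleton' measurable_wt] at h1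
  simp only [wt_bot, wt_top, zero_mul] at h1
  by_contra hne
  rw [ENNReal.top_mul hne] at h1
  exact ENNReal.top_ne_zero h1

lemma IsSymmMeasure.L_ne_top {μ : Measure EReal} [IsFiniteMeasure μ]
    (h : IsSymmMeasure μ) : L μ ≠ ⊤ := by
  have hent : Measurable fun α => ENNReal.ofReal (entFn α) := measurable_entFn.ennreal_ofReal
  -- split the integral at 0
  have hsplit : L μ = ∫⁻ α in Set.Iio (0:EReal), ENNReal.ofReal (entFn α) ∂μ
      + ∫⁻ α in (Set.Iio (0:EReal))ᶜ, ENNReal.ofReal (entFn α) ∂μ :=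
    (lintegral_add_compl _ measurableSet_Iio).symm
  -- the part on [0, ∞] is bounded by 1
  have hpos : ∫⁻ α in (Set.Iio (0:EReal))ᶜ, ENNReal.ofReal (entFn α) ∂μ ≤ μ Set.univ := by
    calc ∫⁻ α in (Set.Iio (0:EReal))ᶜ, ENNReal.ofReal (entFn α) ∂μ
        ≤ ∫⁻ _ in (Set.Iio (0:EReal))ᶜ, 1 ∂μ := by
          refine setLIntegral_mono measurable_const (fun α hα => ?_)
          rw [ENNReal.ofReal_le_one]
          simp only [Set.mem_compl_iff, Set.mem_Iio, not_lt] at hα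
          induction α using EReal.rec with
          | bot => simp at hα
          | top => simp
          | coe a =>
              rw [entFn_coe]
              have ha : (0:ℝ) ≤ a := EReal.coe_nonneg.mp hα
              have he : exp (-a) ≤ 1 := Real.exp_le_one_iff.mpr (by linarith)
              have h2 : (0:ℝ) < 1 + exp (-a) := by positivity
              calc logb 2 (1 + exp (-a)) ≤ logb 2 2 :=
                    Real.logb_le_logb_of_le one_lt_two h2 (by linarith)
                _ = 1 := Real.logb_self_eq_one one_lt_two
        _ = μ (Set.Iio (0:EReal))ᶜ := setLIntegral_one _
        _ ≤ μ Set.univ := measure_mono (Set.subset_univ _)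
  -- bound the weight integral on positives
  have hwt_pos : ∫⁻ α in Set.Ioi (0:EReal), wt α ∂μ ≤ μ Set.univ := by
    calc ∫⁻ α in Set.Ioi (0:EReal), wt α ∂μ ≤ ∫⁻ _ in Set.Ioi (0:EReal), 1 ∂μ := by
          refine setLIntegral_mono measurable_const (fun α hα => ?_)
          simp only [Set.mem_Ioi] at hα
          induction α using EReal.rec with
          | bot => exact absurd hα (by simp)
          | top => simp
          | coe a =>
              rw [wt_coe, ENNReal.ofReal_le_one]
              have ha : (0:ℝ) < a := EReal.coe_pos.mp hα
              exact Real.exp_le_one_iff.mpr (by linarith)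
      _ = μ (Set.Ioi (0:EReal)) := setLIntegral_one _
      _ ≤ μ Set.univ := measure_mono (Set.subset_univ _)
  -- by symmetry the weight integral on negatives is finite
  have hpre : (fun a : EReal => -a) ⁻¹' (Set.Iio (0:EReal)) = Set.Ioi (0:EReal) := by
    ext α
    simp only [Set.mem_preimage, Set.mem_Iio, Set.mem_Ioi]
    rw [show ((0:EReal) = -0) by simp, EReal.neg_lt_neg_iff]
    simp
  have hwt_neg : ∫⁻ α in Set.Iio (0:EReal), wt α ∂μ ≤ μ Set.univ := by
    rw [← h (Set.Iio (0:EReal)) measurableSet_Iio, hpre]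
    exact hwt_pos
  -- bound entropy by weight on negatives
  set c : ENNReal := ENNReal.ofReal (2 / Real.log 2) with hc
  have hneg : ∫⁻ α in Set.Iio (0:EReal), ENNReal.ofReal (entFn α) ∂μ
      ≤ μ Set.univ + c * (μ Set.univ) := by
    calc ∫⁻ α in Set.Iio (0:EReal), ENNReal.ofReal (entFn α) ∂μ
        ≤ ∫⁻ α in Set.Iio (0:EReal), (1 + c * wt α) ∂μ := by
          refine setLIntegral_mono (measurable_const.add (measurable_wt.const_mul c))
            (fun α hα => ?_)
          simp only [Set.mem_Iio] at hα
          induction α using EReal.rec with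
          | bot => simp
          | top => exact absurd hα (by simp)
          | coe a =>
              rw [entFn_coe, wt_coe]
              have ha : a < 0 := EReal.coe_neg'.mp hα
              have hE : (1:ℝ) ≤ exp (-a) := by
                rw [Real.one_le_exp_iff]; linarith
              have hlog2 : (0:ℝ) < Real.log 2 := Real.log_pos one_lt_two
              have hb1 : logb 2 (1 + exp (-a)) ≤ 1 + (-a) / Real.log 2 := by
                have h2 : (0:ℝ) < 1 + exp (-a) := by positivity
                calc logb 2 (1 + exp (-a)) ≤ logb 2 (2 * exp (-a)) :=
                      Real.logb_le_logb_of_le one_lt_two h2 (by linarith)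
                  _ = logb 2 2 + logb 2 (exp (-a)) :=
                      Real.logb_mul two_ne_zero (exp_pos _).ne'
                  _ = 1 + (-a) / Real.log 2 := by
                      rw [Real.logb_self_eq_one one_lt_two, Real.logb, Real.log_exp]
              have hb2 : (-a) ≤ 2 * exp (-a/2) := by
                have := Real.add_one_le_exp (-a/2)
                nlinarith [Real.exp_pos (-a/2)]
              have hb3 : logb 2 (1 + exp (-a)) ≤ 1 + (2 / Real.log 2) * exp (-a/2) := by
                have : (-a) / Real.log 2 ≤ (2 / Real.log 2) * exp (-a/2) := by
                  rw [div_le_iff₀ hlog2] at *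
                  calc (-a) ≤ 2 * exp (-a/2) := hb2
                    _ = 2 / Real.log 2 * exp (-a / 2) * Real.log 2 := by
                        field_simp
                linarith
              calc ENNReal.ofReal (logb 2 (1 + exp (-a)))
                  ≤ ENNReal.ofReal (1 + (2 / Real.log 2) * exp (-a/2)) :=
                    ENNReal.ofReal_le_ofReal hb3
                _ = 1 + ENNReal.ofReal ((2 / Real.log 2) * exp (-a/2)) := by
                    rw [ENNReal.ofReal_add (by norm_num) (by positivity), ENNReal.ofReal_one]
                _ = 1 + c * ENNReal.ofReal (exp (-a/2)) := by
                    rw [hc, ← ENNReal.ofReal_mul (by positivity)]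
      _ = ∫⁻ _ in Set.Iio (0:EReal), 1 ∂μ
          + ∫⁻ α in Set.Iio (0:EReal), c * wt α ∂μ := by
          rw [lintegral_add_left measurable_const]
      _ ≤ μ Set.univ + c * (μ Set.univ) := by
          refine add_le_add ?_ ?_
          · rw [setLIntegral_one]; exact measure_mono (Set.subset_univ _)
          · rw [lintegral_const_mul c measurable_wt]
            exact mul_le_mul_right hwt_neg c
  rw [hsplit]
  have hfin : μ Set.univ + c * μ Set.univ + μ Set.univ < ⊤ := by
    have h1 : μ Set.univ < ⊤ := measure_lt_top _ _
    have h2 : c < ⊤ := ENNReal.ofReal_lt_top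
    exact ENNReal.add_lt_top.mpr ⟨ENNReal.add_lt_top.mpr ⟨h1, ENNReal.mul_lt_top h2 h1⟩, h1⟩
  exact (lt_of_le_of_lt (add_le_add hneg hpos) hfin).ne

end SymmLemmas
section MainAux

lemma mConv_zero_left (ν : Measure EReal) : mConv 0 ν = 0 := by
  unfold mConv
  rw [Measure.zero_prod]
  exact Measure.map_zero _

lemma mCheck_zero_left (ν : Measure EReal) : mCheck 0 ν = 0 := by
  unfold mCheck
  rw [Measure.zero_prod]
  exact Measure.map_zero _

lemma jordan_of_prob (x : SM) (μ : Measure EReal) [IsFiniteMeasure μ]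
    (hx : x = μ.toSignedMeasure) : jp x = μ ∧ jn x = 0 := by
  have hrep : x = μ.toSignedMeasure - (0 : Measure EReal).toSignedMeasure := by
    rw [Measure.toSignedMeasure_zero, sub_zero]; exact hx
  have hjn : jn x = 0 := le_antisymm (jn_le x μ 0 hrep) (Measure.zero_le _)
  have hjp := jordan_eq x μ 0 hrep
  rw [add_zero, hjn, add_zero] at hjp
  exact ⟨hjp, hjn⟩

end MainAux
/-- For all symmetric probability measures `x1, x3, x4 ∈ X`,
`H(x1 ⊛ (x3 - x4)) + H(x1 ⊠ (x3 - x4)) = H(x3 - x4)`. -/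
theorem entropy_duality_difference
    (x1 x3 x4 : SM) (h1 : MemX x1) (h3 : MemX x3) (h4 : MemX x4) :
    H (sConv x1 (x3 - x4)) + H (sCheck x1 (x3 - x4)) = H (x3 - x4) := by
  obtain ⟨⟨μ1, hμ1, hx1⟩, hsymm1⟩ := h1
  obtain ⟨⟨μ3, hμ3, hx3⟩, hsymm3⟩ := h3
  obtain ⟨⟨μ4, hμ4, hx4⟩, hsymm4⟩ := h4
  haveI := hμ1; haveI := hμ3; haveI := hμ4
  have hx1' : x1 = μ1.toSignedMeasure := hx1
  have hx3' : x3 = μ3.toSignedMeasure := hx3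
  have hx4' : x4 = μ4.toSignedMeasure := hx4
  obtain ⟨hjp1, hjn1⟩ := jordan_of_prob x1 μ1 hx1'
  obtain ⟨hjp3, hjn3⟩ := jordan_of_prob x3 μ3 hx3'
  obtain ⟨hjp4, hjn4⟩ := jordan_of_prob x4 μ4 hx4'
  -- symmetry of the measures
  have hsμ1 : IsSymmMeasure μ1 := hjp1 ▸ hsymm1.1
  have hsμ3 : IsSymmMeasure μ3 := hjp3 ▸ hsymm3.1
  have hsμ4 : IsSymmMeasure μ4 := hjp4 ▸ hsymm4.1
  set P := jp (x3 - x4) with hPdef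
  set N := jn (x3 - x4) with hNdef
  have hrepy : x3 - x4 = μ3.toSignedMeasure - μ4.toSignedMeasure := by rw [hx3', hx4']
  have hPle : P ≤ μ3 := jp_le _ μ3 μ4 hrepy
  have hNle : N ≤ μ4 := jn_le _ μ3 μ4 hrepy
  -- finiteness of entropy integrals
  have hL1 : L μ1 ≠ ⊤ := hsμ1.L_ne_top
  have hLP : L P ≠ ⊤ := ne_top_of_le_ne_top hsμ3.L_ne_top (lintegral_mono' hPle le_rfl)
  have hLN : L N ≠ ⊤ := ne_top_of_le_ne_top hsμ4.L_ne_top (lintegral_mono' hNle le_rfl)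
  -- no mass at ⊥
  have hbot1 : μ1 {⊥} = 0 := hsμ1.bot_null
  have hbotP : P {⊥} = 0 :=
    le_zero_iff.mp (le_trans (Measure.le_iff'.mp hPle _) (le_of_eq hsμ3.bot_null))
  have hbotN : N {⊥} = 0 :=
    le_zero_iff.mp (le_trans (Measure.le_iff'.mp hNle _) (le_of_eq hsμ4.bot_null))
  -- the key identities
  have hkP := key_product μ1 P hbot1 hbotP
  have hkN := key_product μ1 N hbot1 hbotN
  rw [measure_univ (μ := μ1), one_mul] at hkP hkN
  -- finiteness of the right-hand sides
  have hrhsP : P Set.univ * L μ1 + L P ≠ ⊤ :=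
    ENNReal.add_ne_top.mpr ⟨ENNReal.mul_ne_top (measure_ne_top _ _) hL1, hLP⟩
  have hrhsN : N Set.univ * L μ1 + L N ≠ ⊤ :=
    ENNReal.add_ne_top.mpr ⟨ENNReal.mul_ne_top (measure_ne_top _ _) hL1, hLN⟩
  obtain ⟨hfA, hfC⟩ := ENNReal.add_ne_top.mp (by rw [hkP]; exact hrhsP)
  obtain ⟨hfB, hfD⟩ := ENNReal.add_ne_top.mp (by rw [hkN]; exact hrhsN)
  -- rewriting the convolutions
  have hconv : sConv x1 (x3 - x4)
      = (mConv μ1 P).toSignedMeasure - (mConv μ1 N).toSignedMeasure := by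
    unfold sConv
    simp only [hjp1, hjn1, mConv_zero_left, Measure.toSignedMeasure_zero, sub_zero, add_zero]
    rfl
  have hcheck : sCheck x1 (x3 - x4)
      = (mCheck μ1 P).toSignedMeasure - (mCheck μ1 N).toSignedMeasure := by
    unfold sCheck
    simp only [hjp1, hjn1, mCheck_zero_left, Measure.toSignedMeasure_zero, sub_zero, add_zero]
    rfl
  -- computing the three entropies
  have hHconv : H (sConv x1 (x3 - x4))
      = (L (mConv μ1 P)).toReal - (L (mConv μ1 N)).toReal :=
    sInt_eq _ _ _ hconv hfA hfB
  have hHcheck : H (sCheck x1 (x3 - x4))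
      = (L (mCheck μ1 P)).toReal - (L (mCheck μ1 N)).toReal :=
    sInt_eq _ _ _ hcheck hfC hfD
  have hHy : H (x3 - x4) = (L P).toReal - (L N).toReal :=
    sInt_eq _ _ _ (toSM_jordan _).symm hLP hLN
  -- equal total masses
  have hmass : (P Set.univ).toReal = (N Set.univ).toReal := by
    have hval : (x3 - x4) Set.univ = 0 := by
      rw [VectorMeasure.sub_apply, hx3', hx4',
        Measure.toSignedMeasure_apply_measurable MeasurableSet.univ,
        Measure.toSignedMeasure_apply_measurable MeasurableSet.univ,
        probReal_univ, probReal_univ, sub_self]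
    have hval2 : (x3 - x4) Set.univ = (P Set.univ).toReal - (N Set.univ).toReal := by
      rw [← toSM_jordan (x3 - x4), VectorMeasure.sub_apply,
        Measure.toSignedMeasure_apply_measurable MeasurableSet.univ,
        Measure.toSignedMeasure_apply_measurable MeasurableSet.univ]
      rfl
    rw [hval] at hval2
    linarith
  -- convert the key identities to the reals
  have heP : (L (mConv μ1 P)).toReal + (L (mCheck μ1 P)).toReal
      = (P Set.univ).toReal * (L μ1).toReal + (L P).toReal := by
    rw [← ENNReal.toReal_add hfA hfC, hkP,
      ENNReal.toReal_add (ENNReal.mul_ne_top (measure_ne_top _ _) hL1) hLP,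
      ENNReal.toReal_mul]
  have heN : (L (mConv μ1 N)).toReal + (L (mCheck μ1 N)).toReal
      = (N Set.univ).toReal * (L μ1).toReal + (L N).toReal := by
    rw [← ENNReal.toReal_add hfB hfD, hkN,
      ENNReal.toReal_add (ENNReal.mul_ne_top (measure_ne_top _ _) hL1) hLN,
      ENNReal.toReal_mul]
  rw [hHconv, hHcheck, hHy]
  rw [hmass] at heP
  linarith
end SCLDPC
end
end

section
/- Properties of the tanh-moment functionals: for every k ≥ 1, (i) M_k(x1 ⊠ x2) = M_k(x1)·M_k(x2) for all x1, x2 ∈ X; (ii) if x1, x2 ∈ X satisfy x1 ⪰ x2, then M_k(x1) ≤ M_k(x2); (iii) 0 ≤ M_k(x) ≤ 1 for every x ∈ X. -/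
open MeasureTheory Real Filter Topology Polynomial

noncomputable section

namespace SCLDPC

/-- The tanh-moment functional `M_k(x) = ∫ tanh(α/2)^{2k} x(dα)`. -/
def Mfun (k : ℕ) (x : SM) : ℝ := sInt (fun α => tanhHalf α ^ (2 * k)) x

/-- `I_f(x) = ∫ f(|tanh(α/2)|) x(dα)`. -/
def If (f : ℝ → ℝ) (x : SM) : ℝ := sInt (fun α => f |tanhHalf α|) x

/-- `x1` is degraded with respect to `x2` (written `x1 ⪰ x2`): `I_f(x1) ≥ I_f(x2)` for
every concave non-increasing `f : [0,1] → ℝ`. -/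
def Degraded (x1 x2 : SM) : Prop :=
  ∀ f : ℝ → ℝ, ConcaveOn ℝ (Set.Icc (0 : ℝ) 1) f → AntitoneOn f (Set.Icc (0 : ℝ) 1) →
    If f x2 ≤ If f x1

/-- `x1` is strictly degraded with respect to `x2` (written `x1 ≻ x2`). -/
def StrictlyDegraded (x1 x2 : SM) : Prop :=
  Degraded x1 x2 ∧ ∃ f : ℝ → ℝ, ConcaveOn ℝ (Set.Icc (0 : ℝ) 1) f ∧
    AntitoneOn f (Set.Icc (0 : ℝ) 1) ∧ If f x2 < If f x1

/-! ### Auxiliary lemmas -/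

lemma measurable_tanh : Measurable Real.tanh := by
  have : Real.tanh = fun x => Real.sinh x / Real.cosh x :=
    funext fun x => Real.tanh_eq_sinh_div_cosh x
  rw [this]
  exact Real.measurable_sinh.div Real.measurable_cosh

lemma tanh_eq' (x : ℝ) :
    Real.tanh x = (Real.exp x - Real.exp (-x)) / (Real.exp x + Real.exp (-x)) := by
  have h : Real.exp x + Real.exp (-x) ≠ 0 := by positivity
  rw [Real.tanh_eq_sinh_div_cosh, Real.sinh_eq, Real.cosh_eq]
  field_simp

lemma abs_tanh_le_one (x : ℝ) : |Real.tanh x| ≤ 1 := by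
  have h1 := Real.exp_pos x
  have h2 := Real.exp_pos (-x)
  rw [tanh_eq', abs_div, abs_of_pos (show (0:ℝ) < Real.exp x + Real.exp (-x) by linarith),
    div_le_one (by linarith)]
  rw [abs_le]
  constructor <;> linarith

lemma abs_tanhHalf_le_one (α : EReal) : |tanhHalf α| ≤ 1 := by
  unfold tanhHalf
  split_ifs <;> simp [abs_tanh_le_one]

lemma tanh_artanh {t : ℝ} (h1 : -1 < t) (h2 : t < 1) : Real.tanh (artanh t) = t := by
  have ht1 : (0:ℝ) < 1 + t := by linarith
  have ht2 : (0:ℝ) < 1 - t := by linarith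
  have hu : (0:ℝ) < (1 + t) / (1 - t) := div_pos ht1 ht2
  set s := Real.exp (artanh t) with hs
  have hs0 : 0 < s := Real.exp_pos _
  have hsq : s ^ 2 = (1 + t) / (1 - t) := by
    have h2' : s ^ 2 = Real.exp (2 * artanh t) := by
      rw [hs, ← Real.exp_nat_mul]; norm_num
    rw [h2']
    unfold artanh
    rw [mul_comm, div_mul_cancel₀ _ (two_ne_zero)]
    exact Real.exp_log hu
  have hkey : s ^ 2 * (1 - t) = 1 + t := by
    rw [hsq]; field_simp
  rw [tanh_eq', Real.exp_neg, ← hs]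
  rw [div_eq_iff (by positivity : s + s⁻¹ ≠ 0)]
  field_simp
  nlinarith [hs0, hkey]

lemma tanhHalf_atanhTwo {t : ℝ} (h : |t| ≤ 1) : tanhHalf (atanhTwo t) = t := by
  rw [abs_le] at h
  unfold atanhTwo
  split_ifs with h1 h2
  · have : t = 1 := le_antisymm h.2 h1
    simp [tanhHalf, this]
  · have : t = -1 := le_antisymm h2 h.1
    simp [tanhHalf, this]
  · push_neg at h1 h2
    unfold tanhHalf
    rw [if_neg (EReal.coe_ne_top _), if_neg (EReal.coe_ne_bot _)]
    simp only [EReal.toReal_coe]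
    rw [mul_comm, mul_div_assoc]
    norm_num
    exact tanh_artanh h2 h1

lemma jd_eq (μ : Measure EReal) [IsFiniteMeasure μ] :
    (μ.toSignedMeasure).toJordanDecomposition =
      JordanDecomposition.mk μ 0 Measure.MutuallySingular.zero_right := by
  have h : μ.toSignedMeasure =
      (JordanDecomposition.mk μ 0 Measure.MutuallySingular.zero_right).toSignedMeasure := by
    rw [JordanDecomposition.toSignedMeasure]
    simp [Measure.toSignedMeasure_zero]
  rw [h, JordanDecomposition.toJordanDecomposition_toSignedMeasure]

lemma jp_toSM (μ : Measure EReal) [IsFiniteMeasure μ] : jp μ.toSignedMeasure = μ := by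
  rw [jp, jd_eq]

lemma jn_toSM (μ : Measure EReal) [IsFiniteMeasure μ] : jn μ.toSignedMeasure = 0 := by
  rw [jn, jd_eq]

lemma Mfun_toSM (k : ℕ) (μ : Measure EReal) [IsFiniteMeasure μ] :
    Mfun k μ.toSignedMeasure = ∫ α, tanhHalf α ^ (2*k) ∂μ := by
  rw [Mfun, sInt, jp_toSM, jn_toSM]
  simp

lemma integrable_tanh_pow (k : ℕ) (μ : Measure EReal) [IsFiniteMeasure μ] :
    Integrable (fun α => tanhHalf α ^ (2*k)) μ := by
  refine Integrable.mono' (integrable_const (1:ℝ))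
    ((measurable_tanhHalf.pow_const _).aestronglyMeasurable) ?_
  filter_upwards with α
  rw [norm_pow, Real.norm_eq_abs]
  exact pow_le_one₀ (abs_nonneg _) (abs_tanhHalf_le_one α)

/-- Properties of the tanh-moment functionals: for every `k ≥ 1`,
(i) `M_k(x1 ⊠ x2) = M_k(x1) M_k(x2)` on `X`; (ii) `x1 ⪰ x2` implies
`M_k(x1) ≤ M_k(x2)`; (iii) `0 ≤ M_k(x) ≤ 1` on `X`. -/
theorem tanh_moment_properties (k : ℕ) (hk : 1 ≤ k) :
    (∀ x1 x2 : SM, MemX x1 → MemX x2 →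
      Mfun k (sCheck x1 x2) = Mfun k x1 * Mfun k x2) ∧
    (∀ x1 x2 : SM, MemX x1 → MemX x2 → Degraded x1 x2 → Mfun k x1 ≤ Mfun k x2) ∧
    (∀ x : SM, MemX x → 0 ≤ Mfun k x ∧ Mfun k x ≤ 1) := by
  refine ⟨?_, ?_, ?_⟩
  · -- (i) multiplicativity under the check-node operation
    rintro x1 x2 ⟨⟨μ, hμ, rfl⟩, -⟩ ⟨⟨ν, hν, rfl⟩, -⟩
    haveI := hμ; haveI := hν
    have hmap : Measurable (fun p : EReal × EReal => atanhTwo (tanhHalf p.1 * tanhHalf p.2)) :=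
      measurable_atanhTwo.comp
        ((measurable_tanhHalf.comp measurable_fst).mul (measurable_tanhHalf.comp measurable_snd))
    have hs : sCheck μ.toSignedMeasure ν.toSignedMeasure = (mCheck μ ν).toSignedMeasure := by
      simp only [sCheck, jp_toSM, jn_toSM]
      simp [mCheck, Measure.prod_zero, Measure.zero_prod, Measure.map_zero,
        Measure.toSignedMeasure_zero]
    rw [hs]
    haveI : IsProbabilityMeasure (mCheck μ ν) := by
      unfold mCheck
      exact Measure.isProbabilityMeasure_map hmap.aemeasurable
    rw [Mfun_toSM, Mfun_toSM, Mfun_toSM, mCheck,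
      integral_map hmap.aemeasurable
        ((measurable_tanhHalf.pow_const _).aestronglyMeasurable)]
    have hpt : ∀ p : EReal × EReal,
        tanhHalf (atanhTwo (tanhHalf p.1 * tanhHalf p.2)) ^ (2*k)
          = (tanhHalf p.1 ^ (2*k)) * (tanhHalf p.2 ^ (2*k)) := by
      intro p
      rw [tanhHalf_atanhTwo, mul_pow]
      calc |tanhHalf p.1 * tanhHalf p.2| = |tanhHalf p.1| * |tanhHalf p.2| := abs_mul _ _
        _ ≤ 1 := mul_le_one₀ (abs_tanhHalf_le_one _) (abs_nonneg _) (abs_tanhHalf_le_one _)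
    simp_rw [hpt]
    exact integral_prod_mul (fun α => tanhHalf α ^ (2*k)) (fun α => tanhHalf α ^ (2*k))
  · -- (ii) monotonicity under degradation
    rintro x1 x2 _ _ hdeg
    have hc : ConcaveOn ℝ (Set.Icc (0:ℝ) 1) (fun t : ℝ => -(t^(2*k))) :=
      ((Even.convexOn_pow (even_two_mul k)).subset (Set.subset_univ _) (convex_Icc 0 1)).neg
    have ha : AntitoneOn (fun t : ℝ => -(t^(2*k))) (Set.Icc (0:ℝ) 1) := by
      intro a haa b hbb hab
      exact neg_le_neg (pow_le_pow_left₀ haa.1 hab _)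
    have h := hdeg _ hc ha
    have key : ∀ x : SM, If (fun t : ℝ => -(t^(2*k))) x = - Mfun k x := by
      intro x
      rw [If, Mfun, sInt, sInt]
      have habs : (fun α : EReal => -(|tanhHalf α| ^ (2*k)))
          = fun α : EReal => -(tanhHalf α ^ (2*k)) := by
        funext α
        rw [pow_mul, pow_mul, sq_abs]
      simp only [habs, integral_neg]
      ring
    rw [key, key] at h
    linarith
  · -- (iii) bounds
    rintro x ⟨⟨μ, hμ, rfl⟩, -⟩
    haveI := hμ
    rw [Mfun_toSM]
    constructor
    · refine integral_nonneg fun α => ?_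
      exact Even.pow_nonneg (even_two_mul k) _
    · calc ∫ α, tanhHalf α ^ (2*k) ∂μ ≤ ∫ _, (1:ℝ) ∂μ := by
            refine integral_mono (integrable_tanh_pow k μ) (integrable_const 1) fun α => ?_
            rw [pow_mul]
            refine pow_le_one₀ (sq_nonneg _) ?_
            nlinarith [abs_tanhHalf_le_one α, sq_abs (tanhHalf α), abs_nonneg (tanhHalf α)]
        _ = 1 := by simp

end SCLDPC
end
end

section
/- Potential change under the shift operator: let x̲ = (x_1, …, x_{N_w}) ∈ X^{N_w} be such that x_i = x_{i_0} for all i_0 ≤ i ≤ N_w. Then U(S(x̲); c) − U(x̲; c) ≤ −U(x_{i_0}; c), where U(x̲; c) is the coupled potential, S is the shift operator, and U(x_{i_0}; c) is the single-system potential. -/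
open MeasureTheory Real Filter Topology Polynomial

noncomputable section

namespace SCLDPC

/-- `Δ_0`, the unit point mass at `0`. -/
def d0 : SM := (Measure.dirac (0 : EReal)).toSignedMeasure

/-- `Δ_∞`, the unit point mass at `+∞`. -/
def dTop : SM := (Measure.dirac (⊤ : EReal)).toSignedMeasure

/-- `x^{⊛n}` with `x^{⊛0} = Δ_0`. -/
def convPow (x : SM) : ℕ → SM
  | 0 => d0
  | n + 1 => sConv (convPow x n) x

/-- `x^{⊠n}` with `x^{⊠0} = Δ_∞`. -/
def checkPow (x : SM) : ℕ → SM
  | 0 => dTop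
  | n + 1 => sCheck (checkPow x n) x

/-- `p^{⊛}(x) = Σ_n p_n x^{⊛n}` for a real polynomial `p`. -/
def polyConv (p : Polynomial ℝ) (x : SM) : SM :=
  ∑ n ∈ Finset.range (p.natDegree + 1), p.coeff n • convPow x n

/-- `p^{⊠}(x) = Σ_n p_n x^{⊠n}` for a real polynomial `p`. -/
def polyCheck (p : Polynomial ℝ) (x : SM) : SM :=
  ∑ n ∈ Finset.range (p.natDegree + 1), p.coeff n • checkPow x n

/-- The single-system potential functional `U(x; c)` of the LDPC(λ, ρ) ensemble:
`U(x; c) = (L'(1)/R'(1)) H(R^⊠(x)) + L'(1) H(ρ^⊠(x)) - L'(1) H(x ⊠ ρ^⊠(x))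
  - H(c ⊛ L^⊛(ρ^⊠(x)))`. -/
def potU (rho L R : Polynomial ℝ) (x c : SM) : ℝ :=
  (derivative L).eval 1 / (derivative R).eval 1 * H (polyCheck R x)
    + (derivative L).eval 1 * H (polyCheck rho x)
    - (derivative L).eval 1 * H (sCheck x (polyCheck rho x))
    - H (sConv c (polyConv L (polyCheck rho x)))

/-- Extension of a vector `(x_1, …, x_{N_w})` by `Δ_∞` outside `{1, …, N_w}`,
where `N_w = 2N + w - 1`. -/
def extVec (N w : ℕ) (xv : ℤ → SM) : ℤ → SM :=
  fun i => if 1 ≤ i ∧ i ≤ ((2 * N + w - 1 : ℕ) : ℤ) then xv i else dTop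

/-- The coupled potential functional `U(x̲; c)` of the spatially-coupled system, with
the convention that `x_i = Δ_∞` for indices `i ≤ 0` and `i > N_w = 2N + w - 1`. -/
def coupledU (rho L R : Polynomial ℝ) (N w : ℕ) (c : SM) (xv : ℤ → SM) : ℝ :=
  (derivative L).eval 1 *
      ∑ i ∈ Finset.range (2 * N + w - 1),
        ((((derivative R).eval 1)⁻¹ *
            H (polyCheck R (extVec N w xv ((i : ℤ) + 1)))
          + H (polyCheck rho (extVec N w xv ((i : ℤ) + 1)))
          - H (sCheck (extVec N w xv ((i : ℤ) + 1))
              (polyCheck rho (extVec N w xv ((i : ℤ) + 1))))))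
    - ∑ i ∈ Finset.range (2 * N),
        H (sConv c (polyConv L
          ((w : ℝ)⁻¹ • ∑ j ∈ Finset.range w,
            polyCheck rho (extVec N w xv ((i : ℤ) + 1 + (j : ℤ))))))

/-- The shift operator `S`: `[S(x̲)]_1 = Δ_∞` and `[S(x̲)]_i = x_{i-1}` for `2 ≤ i`. -/
def shiftOp (xv : ℤ → SM) : ℤ → SM := fun i => if i ≤ 1 then dTop else xv (i - 1)
/-! ### Auxiliary lemmas for Statement 19 -/

/-- A signed measure is *positive* if it is the signed measure of a finite measure. -/
def Pos (x : SM) : Prop := ∃ μ : Measure EReal, ∃ _ : IsFiniteMeasure μ, x = μ.toSignedMeasure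

lemma jp_jn_toSignedMeasure (μ : Measure EReal) [IsFiniteMeasure μ] :
    jp μ.toSignedMeasure = μ ∧ jn μ.toSignedMeasure = 0 := by
  have h : (μ.toSignedMeasure).toJordanDecomposition =
      ⟨μ, 0, MeasureTheory.Measure.MutuallySingular.zero_right⟩ :=
    SignedMeasure.toJordanDecomposition_eq (by
      simp [MeasureTheory.JordanDecomposition.toSignedMeasure])
  exact ⟨by rw [jp, h], by rw [jn, h]⟩

lemma H_nonneg {x : SM} (h : Pos x) : 0 ≤ H x := by
  obtain ⟨μ, hfin, rfl⟩ := h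
  obtain ⟨h1, h2⟩ := jp_jn_toSignedMeasure μ
  rw [H, sInt, h1, h2]
  simp only [MeasureTheory.integral_zero_measure, sub_zero]
  exact MeasureTheory.integral_nonneg entFn_nonneg

lemma Pos.zero : Pos 0 := ⟨0, inferInstance, by simp⟩

lemma Pos.dTop : Pos SCLDPC.dTop := ⟨Measure.dirac ⊤, inferInstance, rfl⟩

lemma Pos.d0 : Pos SCLDPC.d0 := ⟨Measure.dirac 0, inferInstance, rfl⟩

lemma Pos.add {x y : SM} (hx : Pos x) (hy : Pos y) : Pos (x + y) := by
  obtain ⟨μ, hμ, rfl⟩ := hx; obtain ⟨ν, hν, rfl⟩ := hy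
  exact ⟨μ + ν, inferInstance, (Measure.toSignedMeasure_add μ ν).symm⟩

lemma Pos.smul {x : SM} {r : ℝ} (hr : 0 ≤ r) (hx : Pos x) : Pos (r • x) := by
  obtain ⟨μ, hμ, rfl⟩ := hx
  refine ⟨r.toNNReal • μ, inferInstance, ?_⟩
  rw [Measure.toSignedMeasure_smul, NNReal.smul_def, Real.coe_toNNReal r hr]

lemma Pos.sum {ι : Type*} {s : Finset ι} {f : ι → SM} (h : ∀ i ∈ s, Pos (f i)) :
    Pos (∑ i ∈ s, f i) :=
  Finset.sum_induction f Pos (fun _ _ => Pos.add) Pos.zero h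

lemma memX_pos {x : SM} (h : MemX x) : Pos x := by
  obtain ⟨⟨μ, hμ, hx⟩, -⟩ := h
  letI := hμ
  exact ⟨μ, inferInstance, hx⟩

lemma mConv_zero_right (μ : Measure EReal) : mConv μ 0 = 0 := by simp [mConv]
lemma mCheck_zero_right (μ : Measure EReal) : mCheck μ 0 = 0 := by simp [mCheck]

lemma Pos.sConv {x y : SM} (hx : Pos x) (hy : Pos y) : Pos (sConv x y) := by
  obtain ⟨μ, hμ, rfl⟩ := hx; obtain ⟨ν, hν, rfl⟩ := hy
  obtain ⟨h1, h2⟩ := jp_jn_toSignedMeasure μ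
  obtain ⟨h3, h4⟩ := jp_jn_toSignedMeasure ν
  refine ⟨mConv μ ν, inferInstance, ?_⟩
  simp only [SCLDPC.sConv, h1, h2, h3, h4, mConv_zero_left, mConv_zero_right,
    Measure.toSignedMeasure_zero]
  abel

lemma Pos.sCheck {x y : SM} (hx : Pos x) (hy : Pos y) : Pos (sCheck x y) := by
  obtain ⟨μ, hμ, rfl⟩ := hx; obtain ⟨ν, hν, rfl⟩ := hy
  obtain ⟨h1, h2⟩ := jp_jn_toSignedMeasure μ
  obtain ⟨h3, h4⟩ := jp_jn_toSignedMeasure ν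
  refine ⟨mCheck μ ν, inferInstance, ?_⟩
  simp only [SCLDPC.sCheck, h1, h2, h3, h4, mCheck_zero_left, mCheck_zero_right,
    Measure.toSignedMeasure_zero]
  abel

lemma Pos.convPow {x : SM} (hx : Pos x) : ∀ n, Pos (convPow x n)
  | 0 => Pos.d0
  | n + 1 => (Pos.convPow hx n).sConv hx

lemma Pos.checkPow {x : SM} (hx : Pos x) : ∀ n, Pos (checkPow x n)
  | 0 => Pos.dTop
  | n + 1 => (Pos.checkPow hx n).sCheck hx

lemma Pos.polyConv {p : Polynomial ℝ} (hp : ∀ n, 0 ≤ p.coeff n) {x : SM} (hx : Pos x) :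
    Pos (polyConv p x) :=
  Pos.sum fun n _ => Pos.smul (hp n) (hx.convPow n)

lemma Pos.polyCheck {p : Polynomial ℝ} (hp : ∀ n, 0 ≤ p.coeff n) {x : SM} (hx : Pos x) :
    Pos (polyCheck p x) :=
  Pos.sum fun n _ => Pos.smul (hp n) (hx.checkPow n)

/-- Coefficient nonnegativity from the structure of the derivative. -/
lemma coeff_nonneg_of_deriv {p q : Polynomial ℝ} (hq : ∀ n, 0 ≤ q.coeff n)
    (h0 : p.eval 0 = 0) (h1 : p.eval 1 = 1)
    (hd : derivative p = Polynomial.C ((derivative p).eval 1) * q) :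
    ∀ n, 0 ≤ p.coeff n := by
  have hc0 : p.coeff 0 = 0 := by rwa [Polynomial.coeff_zero_eq_eval_zero]
  have hcoeff : ∀ n : ℕ, p.coeff (n + 1) * (n + 1) = (derivative p).eval 1 * q.coeff n := by
    intro n
    have := Polynomial.coeff_derivative p n
    rw [hd] at this
    simpa [Polynomial.coeff_C_mul] using this.symm
  have hdnn : 0 ≤ (derivative p).eval 1 := by
    by_contra hneg
    push_neg at hneg
    have hle : ∀ n : ℕ, p.coeff n ≤ 0 := by
      intro n
      match n with
      | 0 => exact le_of_eq hc0
      | Nat.succ m =>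
        have h := hcoeff m
        nlinarith [hq m, (Nat.cast_add_one_pos m : (0:ℝ) < (m:ℝ) + 1)]
    have : p.eval 1 ≤ 0 := by
      rw [Polynomial.eval_eq_sum_range]
      refine Finset.sum_nonpos fun i _ => ?_
      simpa using hle i
    linarith
  intro n
  match n with
  | 0 => exact le_of_eq hc0.symm
  | Nat.succ m =>
    have h := hcoeff m
    nlinarith [hq m, (Nat.cast_add_one_pos m : (0:ℝ) < (m:ℝ) + 1)]

lemma sCheck_dTop_dTop : sCheck dTop dTop = dTop := by
  obtain ⟨h1, h2⟩ := jp_jn_toSignedMeasure (Measure.dirac (⊤ : EReal))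
  have hjp : jp SCLDPC.dTop = Measure.dirac ⊤ := h1
  have hjn : jn SCLDPC.dTop = 0 := h2
  have hmeas : Measurable fun p : EReal × EReal => atanhTwo (tanhHalf p.1 * tanhHalf p.2) :=
    measurable_atanhTwo.comp
      ((measurable_tanhHalf.comp measurable_fst).mul (measurable_tanhHalf.comp measurable_snd))
  have hval : mCheck (Measure.dirac ⊤) (Measure.dirac ⊤) = Measure.dirac (⊤ : EReal) := by
    rw [mCheck, Measure.dirac_prod_dirac, Measure.map_dirac' hmeas]
    norm_num [tanhHalf, atanhTwo]
  simp only [SCLDPC.sCheck, hjp, hjn, mCheck_zero_left, mCheck_zero_right,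
    Measure.toSignedMeasure_zero, hval]
  show _ - 0 - 0 + 0 = SCLDPC.dTop
  abel

lemma checkPow_dTop : ∀ n, checkPow dTop n = dTop
  | 0 => rfl
  | n + 1 => by rw [checkPow, checkPow_dTop n, sCheck_dTop_dTop]

lemma polyCheck_dTop {p : Polynomial ℝ} (hp : p.eval 1 = 1) : polyCheck p dTop = dTop := by
  unfold polyCheck
  have : ∀ n ∈ Finset.range (p.natDegree + 1),
      p.coeff n • checkPow SCLDPC.dTop n = p.coeff n • SCLDPC.dTop := by
    intro n _; rw [checkPow_dTop]
  rw [Finset.sum_congr rfl this, ← Finset.sum_smul]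
  have hsum : ∑ n ∈ Finset.range (p.natDegree + 1), p.coeff n = 1 := by
    have := Polynomial.eval_eq_sum_range (x := (1:ℝ)) (p := p)
    simpa [hp] using this.symm
  rw [hsum, one_smul]

lemma H_dTop : H dTop = 0 := by
  obtain ⟨h1, h2⟩ := jp_jn_toSignedMeasure (Measure.dirac (⊤ : EReal))
  have hjp : jp SCLDPC.dTop = Measure.dirac ⊤ := h1
  have hjn : jn SCLDPC.dTop = 0 := h2
  rw [H, sInt, hjp, hjn]
  simp [entFn]

lemma sum_tele (f : ℕ → ℝ) (n : ℕ) :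
    (∑ i ∈ Finset.range n, f i) - ∑ i ∈ Finset.range n, f (i + 1) = f 0 - f n := by
  induction n with
  | zero => simp
  | succ n ih => rw [Finset.sum_range_succ, Finset.sum_range_succ]; linarith


set_option maxHeartbeats 2000000 in
/-- Potential change under the shift operator: if
`x̲ = (x_1, …, x_{N_w}) ∈ X^{N_w}` satisfies `x_i = x_{i_0}` for all
`i_0 = N + ⌊w/2⌋ ≤ i ≤ N_w`, then
`U(S(x̲); c) - U(x̲; c) ≤ -U(x_{i_0}; c)`. -/
theorem coupled_potential_shift_bound
    (lam rho L R : Polynomial ℝ)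
    (hlam0 : lam.coeff 0 = 0) (hrho0 : rho.coeff 0 = 0)
    (hlamnn : ∀ n, 0 ≤ lam.coeff n) (hrhonn : ∀ n, 0 ≤ rho.coeff n)
    (hlam1 : lam.eval 1 = 1) (hrho1 : rho.eval 1 = 1)
    (hL0 : L.eval 0 = 0) (hL1 : L.eval 1 = 1)
    (hR0 : R.eval 0 = 0) (hR1 : R.eval 1 = 1)
    (hLd : derivative L = Polynomial.C ((derivative L).eval 1) * lam)
    (hRd : derivative R = Polynomial.C ((derivative R).eval 1) * rho)
    (N w : ℕ) (hN : 1 ≤ N) (hw : 1 ≤ w) (hwN : w / 2 ≤ N)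
    (c : SM) (hc : MemX c) (xv : ℤ → SM)
    (hxX : ∀ i : ℤ, 1 ≤ i → i ≤ ((2 * N + w - 1 : ℕ) : ℤ) → MemX (xv i))
    (hconst : ∀ i : ℤ, ((N : ℤ) + ((w / 2 : ℕ) : ℤ)) ≤ i →
      i ≤ ((2 * N + w - 1 : ℕ) : ℤ) → xv i = xv ((N : ℤ) + ((w / 2 : ℕ) : ℤ))) :
    coupledU rho L R N w c (shiftOp xv) - coupledU rho L R N w c xv
      ≤ -potU rho L R (xv ((N : ℤ) + ((w / 2 : ℕ) : ℤ))) c := by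
  have hLnn : ∀ n, 0 ≤ L.coeff n := coeff_nonneg_of_deriv hlamnn hL0 hL1 hLd
  set i0 : ℤ := (N : ℤ) + ((w / 2 : ℕ) : ℤ) with hi0def
  -- facts about extVec
  have he_in : ∀ k : ℤ, 1 ≤ k → k ≤ ((2 * N + w - 1 : ℕ) : ℤ) → extVec N w xv k = xv k := by
    intro k h1 h2
    simp only [extVec, if_pos (And.intro h1 h2)]
  have he_out : ∀ k : ℤ, k ≤ 0 → extVec N w xv k = dTop := by
    intro k hk
    simp only [extVec]
    rw [if_neg (by omega)]
  have hPos_e : ∀ k : ℤ, Pos (extVec N w xv k) := by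
    intro k
    by_cases h : 1 ≤ k ∧ k ≤ ((2 * N + w - 1 : ℕ) : ℤ)
    · rw [he_in k h.1 h.2]; exact memX_pos (hxX k h.1 h.2)
    · simp only [extVec, if_neg h]; exact Pos.dTop
  have hshift : ∀ k : ℤ, k ≤ ((2 * N + w - 1 : ℕ) : ℤ) →
      extVec N w (shiftOp xv) k = extVec N w xv (k - 1) := by
    intro k hk
    by_cases h1 : k ≤ 0
    · simp only [extVec]
      rw [if_neg (by omega), if_neg (by omega)]
    · push_neg at h1
      simp only [extVec, shiftOp]
      rw [if_pos ⟨by omega, hk⟩]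
      by_cases h2 : k ≤ 1
      · rw [if_pos h2, if_neg (by omega)]
      · rw [if_neg h2, if_pos ⟨by omega, by omega⟩]
  -- the per-site functions
  set f : ℕ → ℝ := fun i =>
    ((derivative R).eval 1)⁻¹ * H (polyCheck R (extVec N w xv (i : ℤ)))
      + H (polyCheck rho (extVec N w xv (i : ℤ)))
      - H (sCheck (extVec N w xv (i : ℤ)) (polyCheck rho (extVec N w xv (i : ℤ)))) with hfdef
  set g : ℕ → ℝ := fun i =>
    H (sConv c (polyConv L ((w : ℝ)⁻¹ •
      ∑ j ∈ Finset.range w, polyCheck rho (extVec N w xv ((i : ℤ) + (j : ℤ)))))) with hgdef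
  have key1 : ∀ yv : ℤ → SM, coupledU rho L R N w c yv =
      (derivative L).eval 1 * ∑ i ∈ Finset.range (2 * N + w - 1),
        (((derivative R).eval 1)⁻¹ * H (polyCheck R (extVec N w yv ((i : ℤ) + 1)))
          + H (polyCheck rho (extVec N w yv ((i : ℤ) + 1)))
          - H (sCheck (extVec N w yv ((i : ℤ) + 1))
              (polyCheck rho (extVec N w yv ((i : ℤ) + 1)))))
      - ∑ i ∈ Finset.range (2 * N), H (sConv c (polyConv L ((w : ℝ)⁻¹ •
          ∑ j ∈ Finset.range w, polyCheck rho (extVec N w yv ((i : ℤ) + 1 + (j : ℤ)))))) :=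
    fun _ => rfl
  have hUshift : coupledU rho L R N w c (shiftOp xv)
      = (derivative L).eval 1 * (∑ i ∈ Finset.range (2 * N + w - 1), f i)
        - ∑ i ∈ Finset.range (2 * N), g i := by
    rw [key1]
    have hs1 : ∑ i ∈ Finset.range (2 * N + w - 1),
        (((derivative R).eval 1)⁻¹ * H (polyCheck R (extVec N w (shiftOp xv) ((i : ℤ) + 1)))
          + H (polyCheck rho (extVec N w (shiftOp xv) ((i : ℤ) + 1)))
          - H (sCheck (extVec N w (shiftOp xv) ((i : ℤ) + 1))
              (polyCheck rho (extVec N w (shiftOp xv) ((i : ℤ) + 1)))))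
        = ∑ i ∈ Finset.range (2 * N + w - 1), f i := by
      refine Finset.sum_congr rfl fun i hi => ?_
      have hi' := Finset.mem_range.mp hi
      rw [hshift ((i : ℤ) + 1) (by omega)]
      rw [show (i : ℤ) + 1 - 1 = (i : ℤ) from by ring]
    have hs2 : ∑ i ∈ Finset.range (2 * N), H (sConv c (polyConv L ((w : ℝ)⁻¹ •
          ∑ j ∈ Finset.range w, polyCheck rho (extVec N w (shiftOp xv) ((i : ℤ) + 1 + (j : ℤ))))))
        = ∑ i ∈ Finset.range (2 * N), g i := by
      refine Finset.sum_congr rfl fun i hi => ?_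
      have hi' := Finset.mem_range.mp hi
      have hin : ∑ j ∈ Finset.range w,
          polyCheck rho (extVec N w (shiftOp xv) ((i : ℤ) + 1 + (j : ℤ)))
          = ∑ j ∈ Finset.range w, polyCheck rho (extVec N w xv ((i : ℤ) + (j : ℤ))) := by
        refine Finset.sum_congr rfl fun j hj => ?_
        have hj' := Finset.mem_range.mp hj
        rw [hshift ((i : ℤ) + 1 + (j : ℤ)) (by omega)]
        rw [show (i : ℤ) + 1 + (j : ℤ) - 1 = (i : ℤ) + (j : ℤ) from by ring]
      rw [hin]
    rw [hs1, hs2]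
  have hUorig : coupledU rho L R N w c xv
      = (derivative L).eval 1 * (∑ i ∈ Finset.range (2 * N + w - 1), f (i + 1))
        - ∑ i ∈ Finset.range (2 * N), g (i + 1) := by
    rw [key1]
    have hs1 : ∑ i ∈ Finset.range (2 * N + w - 1),
        (((derivative R).eval 1)⁻¹ * H (polyCheck R (extVec N w xv ((i : ℤ) + 1)))
          + H (polyCheck rho (extVec N w xv ((i : ℤ) + 1)))
          - H (sCheck (extVec N w xv ((i : ℤ) + 1))
              (polyCheck rho (extVec N w xv ((i : ℤ) + 1)))))
        = ∑ i ∈ Finset.range (2 * N + w - 1), f (i + 1) := by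
      refine Finset.sum_congr rfl fun i hi => ?_
      simp only [hfdef]
      rw [show (((i + 1 : ℕ)) : ℤ) = (i : ℤ) + 1 from by push_cast; ring]
    have hs2 : ∑ i ∈ Finset.range (2 * N), H (sConv c (polyConv L ((w : ℝ)⁻¹ •
          ∑ j ∈ Finset.range w, polyCheck rho (extVec N w xv ((i : ℤ) + 1 + (j : ℤ))))))
        = ∑ i ∈ Finset.range (2 * N), g (i + 1) := by
      refine Finset.sum_congr rfl fun i hi => ?_
      simp only [hgdef]
      rw [show (((i + 1 : ℕ)) : ℤ) = (i : ℤ) + 1 from by push_cast; ring]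
    rw [hs1, hs2]
  have t1 := sum_tele f (2 * N + w - 1)
  have t2 := sum_tele g (2 * N)
  have hf0 : f 0 = 0 := by
    simp only [hfdef, Nat.cast_zero]
    rw [he_out 0 le_rfl, polyCheck_dTop hR1, polyCheck_dTop hrho1, sCheck_dTop_dTop, H_dTop]
    ring
  have hfNw : f (2 * N + w - 1)
      = ((derivative R).eval 1)⁻¹ * H (polyCheck R (xv i0))
        + H (polyCheck rho (xv i0)) - H (sCheck (xv i0) (polyCheck rho (xv i0))) := by
    have heq : extVec N w xv (((2 * N + w - 1 : ℕ) : ℤ)) = xv i0 := by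
      rw [he_in _ (by omega) le_rfl, hconst _ (by omega) le_rfl]
    simp only [hfdef, heq]
  have hg2N : g (2 * N) = H (sConv c (polyConv L (polyCheck rho (xv i0)))) := by
    simp only [hgdef]
    have heq : ∀ j ∈ Finset.range w,
        polyCheck rho (extVec N w xv (((2 * N : ℕ) : ℤ) + (j : ℤ)))
          = polyCheck rho (xv i0) := by
      intro j hj
      have hj' := Finset.mem_range.mp hj
      rw [he_in _ (by omega) (by omega), hconst _ (by omega) (by omega)]
    rw [Finset.sum_congr rfl heq, Finset.sum_const, Finset.card_range,
      ← Nat.cast_smul_eq_nsmul ℝ, smul_smul,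
      inv_mul_cancel₀ (Nat.cast_ne_zero.mpr (by omega) : (w : ℝ) ≠ 0), one_smul]
  have hg0 : 0 ≤ g 0 := by
    simp only [hgdef]
    apply H_nonneg
    apply Pos.sConv (memX_pos hc)
    apply Pos.polyConv hLnn
    apply Pos.smul (by positivity)
    exact Pos.sum fun j _ => Pos.polyCheck hrhonn (hPos_e _)
  rw [hUshift, hUorig]
  have hrw : (derivative L).eval 1 * (∑ i ∈ Finset.range (2 * N + w - 1), f i)
        - ∑ i ∈ Finset.range (2 * N), g i
        - ((derivative L).eval 1 * (∑ i ∈ Finset.range (2 * N + w - 1), f (i + 1))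
          - ∑ i ∈ Finset.range (2 * N), g (i + 1))
      = (derivative L).eval 1
          * ((∑ i ∈ Finset.range (2 * N + w - 1), f i)
            - ∑ i ∈ Finset.range (2 * N + w - 1), f (i + 1))
        - ((∑ i ∈ Finset.range (2 * N), g i) - ∑ i ∈ Finset.range (2 * N), g (i + 1)) := by
    ring
  rw [hrw, t1, t2, hf0, hfNw, hg2N]
  simp only [potU]
  rw [div_eq_mul_inv]
  ring_nf
  nlinarith [hg0]

end SCLDPC
end
end
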